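/- For n ≥ 6, let r_n be the unique real number with 2^{−n} < r_n < 2^{−n} + 2n·4^{−n} and g_n(2 − 2r_n) = 0. Then the ratio (2 − 2r_n)/(2 + 2κ_n) equals 1 − 2κ_n + o(κ_n) as n → ∞; precisely, the limit as n → ∞ of (1 − (2 − 2r_n)/(2 + 2κ_n)) / κ_n equals 2. -/

import Mathlib

open Polynomial Filter Topology

/-- For `n ≥ 6`, let `r_n` be the unique real with `2^{-n} < r_n < 2^{-n} + 2n·4^{-n}`
and `g_n(2 - 2r_n) = 0`, and let `κ_n` be the unique `κ ∈ (0,1/2)` with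
`(2+2κ)^n κ = 1`.  Then `(1 - (2 - 2r_n)/(2 + 2κ_n)) / κ_n → 2` as `n → ∞`,
i.e. `(2 - 2r_n)/(2 + 2κ_n) = 1 - 2κ_n + o(κ_n)`. -/
theorem second_eigenvalue_asymptotic (κ r : ℕ → ℝ)
    (hκ : ∀ n : ℕ, 1 ≤ n → κ n ∈ Set.Ioo (0 : ℝ) (1/2) ∧ (2 + 2*κ n)^n * κ n = 1)
    (hr : ∀ n : ℕ, 6 ≤ n →
      (1/2^n < r n ∧ r n < 1/2^n + 2*n/4^n) ∧
      Polynomial.eval (2 - 2*r n) (X ^ (n + 1) - C 2 * X ^ n + C 2 : ℝ[X]) = 0) :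
    Tendsto (fun n : ℕ => (1 - (2 - 2*r n)/(2 + 2*κ n)) / κ n) atTop (𝓝 2) := by
  have hκ0 : ∀ n, 1 ≤ n → 0 < κ n := fun n hn => (hκ n hn).1.1
  -- κ n ≤ 1/2^n
  have hκle : ∀ n, 1 ≤ n → κ n ≤ 1/2^n := by
    intro n hn
    obtain ⟨⟨h0, _⟩, heq⟩ := hκ n hn
    have h2n : (2:ℝ)^n ≤ (2+2*κ n)^n := pow_le_pow_left₀ (by norm_num) (by linarith) n
    have h1 : (2:ℝ)^n * κ n ≤ 1 := by nlinarith
    rw [le_div_iff₀ (pow_pos two_pos n)]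
    linarith
  -- κ n * 2^n = ((1+κ n)^n)⁻¹
  have hκmul : ∀ n, 1 ≤ n → κ n * 2^n = ((1+κ n)^n)⁻¹ := by
    intro n hn
    obtain ⟨⟨h0, _⟩, heq⟩ := hκ n hn
    refine eq_inv_of_mul_eq_one_left ?_
    have : (2 + 2*κ n) = 2 * (1 + κ n) := by ring
    rw [this, mul_pow] at heq
    calc κ n * 2^n * (1+κ n)^n = 2^n * (1+κ n)^n * κ n := by ring
      _ = 1 := heq
  -- n/2^n → 0
  have hn2 : Tendsto (fun n : ℕ => (n:ℝ)/2^n) atTop (𝓝 0) := by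
    have := tendsto_self_mul_const_pow_of_lt_one (r := (1:ℝ)/2) (by norm_num) (by norm_num)
    refine this.congr fun n => ?_
    rw [div_pow, one_pow]
    ring
  -- (1 + κ n)^n → 1
  have hpow1 : Tendsto (fun n : ℕ => (1+κ n)^n) atTop (𝓝 1) := by
    have hub : Tendsto (fun n : ℕ => Real.exp ((n:ℝ)/2^n)) atTop (𝓝 1) := by
      simpa [Function.comp_def] using (Real.continuous_exp.continuousAt.tendsto.comp hn2)
    refine tendsto_of_tendsto_of_tendsto_of_le_of_le' tendsto_const_nhds hub ?_ ?_
    · filter_upwards [eventually_ge_atTop 1] with n hn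
      exact one_le_pow₀ (by linarith [hκ0 n hn])
    · filter_upwards [eventually_ge_atTop 1] with n hn
      have h0 := hκ0 n hn
      have hle := hκle n hn
      calc (1+κ n)^n = (κ n + 1)^n := by ring_nf
        _ ≤ (Real.exp (κ n))^n :=
            pow_le_pow_left₀ (by linarith) (Real.add_one_le_exp (κ n)) n
        _ = Real.exp (n * κ n) := by rw [← Real.exp_nat_mul]
        _ ≤ Real.exp ((n:ℝ)/2^n) := by
            apply Real.exp_le_exp.2
            rw [div_eq_mul_inv, ← one_div]
            exact mul_le_mul_of_nonneg_left hle (Nat.cast_nonneg n)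
  -- κ n * 2^n → 1
  have hκ2 : Tendsto (fun n : ℕ => κ n * 2^n) atTop (𝓝 1) := by
    have : Tendsto (fun n : ℕ => ((1+κ n)^n)⁻¹) atTop (𝓝 1) := by
      simpa using hpow1.inv₀ one_ne_zero
    refine this.congr' ?_
    filter_upwards [eventually_ge_atTop 1] with n hn
    exact (hκmul n hn).symm
  -- r n * 2^n → 1
  have hr2 : Tendsto (fun n : ℕ => r n * 2^n) atTop (𝓝 1) := by
    have hub : Tendsto (fun n : ℕ => 1 + 2*(n:ℝ)/2^n) atTop (𝓝 1) := by
      have : Tendsto (fun n : ℕ => 2*((n:ℝ)/2^n)) atTop (𝓝 (2*0)) := hn2.const_mul 2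
      simpa [mul_div_assoc] using (tendsto_const_nhds (x := (1:ℝ))).add this
    refine tendsto_of_tendsto_of_tendsto_of_le_of_le' tendsto_const_nhds hub ?_ ?_
    · filter_upwards [eventually_ge_atTop 6] with n hn
      have h := (hr n hn).1.1
      have h2 : (0:ℝ) < 2^n := pow_pos two_pos n
      rw [div_lt_iff₀ h2] at h
      linarith
    · filter_upwards [eventually_ge_atTop 6] with n hn
      have h := (hr n hn).1.2
      have h2 : (0:ℝ) < 2^n := pow_pos two_pos n
      have h4 : ((4:ℝ))^n = 2^n * 2^n := by
        rw [← mul_pow]; norm_num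
      have : r n * 2^n < (1/2^n + 2*n/4^n) * 2^n :=
        mul_lt_mul_of_pos_right h h2
      calc r n * 2^n ≤ (1/2^n + 2*n/4^n) * 2^n := this.le
        _ = 1 + 2*(n:ℝ)/2^n := by
            field_simp [h4]
            rw [h4]
            ring
  -- κ n → 0
  have hκz : Tendsto κ atTop (𝓝 0) := by
    have hub : Tendsto (fun n : ℕ => (1:ℝ)/2^n) atTop (𝓝 0) := by
      have := tendsto_pow_atTop_nhds_zero_of_lt_one (r := (1:ℝ)/2) (by norm_num) (by norm_num)
      refine this.congr fun n => by rw [div_pow, one_pow]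
    refine tendsto_of_tendsto_of_tendsto_of_le_of_le' tendsto_const_nhds hub ?_ ?_
    · filter_upwards [eventually_ge_atTop 1] with n hn
      exact (hκ0 n hn).le
    · filter_upwards [eventually_ge_atTop 1] with n hn
      exact hκle n hn
  -- r n / κ n → 1
  have hrk : Tendsto (fun n : ℕ => r n / κ n) atTop (𝓝 1) := by
    have h : Tendsto (fun n : ℕ => (r n * 2^n)/(κ n * 2^n)) atTop (𝓝 1) := by
      have h' := hr2.div hκ2 one_ne_zero
      rw [div_one] at h'
      exact h'
    refine h.congr' ?_
    filter_upwards with n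
    rw [mul_div_mul_right _ _ (by positivity : (2:ℝ)^n ≠ 0)]
  -- final
  have hmain : Tendsto (fun n : ℕ => 2*(1 + r n/κ n)/(2+2*κ n)) atTop (𝓝 2) := by
    have hnum : Tendsto (fun n : ℕ => 2*(1 + r n/κ n)) atTop (𝓝 (2*(1+1))) :=
      ((tendsto_const_nhds (x := (1:ℝ))).add hrk).const_mul 2
    have hden : Tendsto (fun n : ℕ => 2+2*κ n) atTop (𝓝 (2+2*0)) :=
      (tendsto_const_nhds (x := (2:ℝ))).add (hκz.const_mul 2)
    have := hnum.div hden (by norm_num)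
    norm_num at this
    exact this
  refine hmain.congr' ?_
  filter_upwards [eventually_ge_atTop 1] with n hn
  have h0 := hκ0 n hn
  have hden : (0:ℝ) < 2 + 2*κ n := by linarith
  field_simp
  ring
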